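/- arXiv:1311.0934 — 2 statements merged into one kernel-verified Lean document; each statement's English description precedes it below -/
import Mathlib

section
/- Let $f : [0,T] \to [0,\infty)$ be continuous with $f(0) = 0$, and suppose that for some constants $K \ge 0$, $\varepsilon \in (0,1)$ and every integer $N \ge 1$, $f(t) \le K\,\Theta(N) \int_0^t f(\tau)\, d\tau + K\, 2^{-N\varepsilon}$ for all $t \in [0,T]$, where $\Theta : [1,\infty) \to [1,\infty)$ is continuous nondecreasing with $\int_1^{\infty} \frac{ds}{\Theta(s)} = \infty$. Then $f \equiv 0$ on $[0,T]$. -/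
open MeasureTheory Set Filter in
theorem stmt_18 (T : ℝ) (hT : 0 ≤ T) (f : ℝ → ℝ)
    (hf : ContinuousOn f (Set.Icc 0 T)) (hf0 : f 0 = 0)
    (hfpos : ∀ t ∈ Set.Icc 0 T, 0 ≤ f t)
    (K ε : ℝ) (hK : 0 ≤ K) (hε0 : 0 < ε) (hε1 : ε < 1)
    (Θ : ℝ → ℝ) (hΘcont : ContinuousOn Θ (Set.Ici 1))
    (hΘmono : MonotoneOn Θ (Set.Ici 1)) (hΘ1 : ∀ s : ℝ, 1 ≤ s → 1 ≤ Θ s)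
    (hΘdiv : ∫⁻ s in Set.Ioi (1 : ℝ), ENNReal.ofReal (1 / Θ s) = ⊤)
    (hyp : ∀ N : ℕ, 1 ≤ N → ∀ t ∈ Set.Icc 0 T,
      f t ≤ K * Θ N * (∫ τ in (0 : ℝ)..t, f τ) + K * 2 ^ (-(N : ℝ) * ε)) :
    ∀ t ∈ Set.Icc 0 T, f t = 0 := by
  have hlog2 : (0:ℝ) < Real.log 2 := Real.log_pos one_lt_two
  have hεlog2 : 0 < ε * Real.log 2 := mul_pos hε0 hlog2
  -- clamp f to a continuous function on ℝ
  set fc : ℝ → ℝ := fun t => f (max 0 (min t T)) with hfc_def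
  have hmem : ∀ t : ℝ, max 0 (min t T) ∈ Set.Icc 0 T :=
    fun t => ⟨le_max_left _ _, max_le hT (min_le_right t T)⟩
  have hfc_cont : Continuous fc :=
    hf.comp_continuous (continuous_const.max (continuous_id.min continuous_const)) hmem
  have hfc_eq : ∀ t ∈ Set.Icc 0 T, fc t = f t := by
    intro t ht
    simp only [hfc_def]
    rw [min_eq_left ht.2, max_eq_right ht.1]
  have hfc_nonneg : ∀ t, 0 ≤ fc t := fun t => hfpos _ (hmem t)
  set F : ℝ → ℝ := fun t => ∫ τ in (0:ℝ)..t, fc τ with hF_def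
  have hFd : ∀ t, HasDerivAt F (fc t) t := fun t =>
    intervalIntegral.integral_hasDerivAt_right (hfc_cont.intervalIntegrable 0 t)
      (hfc_cont.stronglyMeasurableAtFilter _ _) hfc_cont.continuousAt
  have hFcont : Continuous F := continuous_iff_continuousAt.mpr fun t => (hFd t).continuousAt
  have hFmono : Monotone F := by
    intro a c hac
    have h1 : F a + ∫ τ in a..c, fc τ = F c :=
      intervalIntegral.integral_add_adjacent_intervals (hfc_cont.intervalIntegrable _ _)
        (hfc_cont.intervalIntegrable _ _)
    have h2 : 0 ≤ ∫ τ in a..c, fc τ :=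
      intervalIntegral.integral_nonneg hac fun u _ => hfc_nonneg u
    linarith
  have hF0 : F 0 = 0 := intervalIntegral.integral_same
  have hFnn : ∀ t, 0 ≤ t → 0 ≤ F t := fun t ht =>
    intervalIntegral.integral_nonneg ht fun u _ => hfc_nonneg u
  have hFeq : ∀ t ∈ Set.Icc 0 T, F t = ∫ τ in (0:ℝ)..t, f τ := by
    intro t ht
    refine intervalIntegral.integral_congr fun τ hτ => hfc_eq τ ?_
    rw [Set.uIcc_of_le ht.1] at hτ
    exact ⟨hτ.1, hτ.2.trans ht.2⟩
  -- the key pointwise bound, via optimization over N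
  have key : ∀ t ∈ Set.Icc 0 T, 0 < F t → F t ≤ 1/2 →
      f t ≤ 2 * K * Θ (1 - Real.log (F t) / (ε * Real.log 2)) * F t := by
    intro t ht hpos hhalf
    set L : ℝ := -Real.log (F t) / (ε * Real.log 2) with hL_def
    have hL1' : 1 - Real.log (F t) / (ε * Real.log 2) = L + 1 := by
      rw [hL_def, neg_div]; ring
    rw [hL1']
    have hlogF : Real.log (F t) ≤ -Real.log 2 := by
      have h1 : Real.log (F t) ≤ Real.log (1/2) := Real.log_le_log hpos hhalf
      rwa [one_div, Real.log_inv] at h1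
    have hL1 : 1/ε ≤ L := by
      rw [hL_def, le_div_iff₀ hεlog2]
      have : 1/ε * (ε * Real.log 2) = Real.log 2 := by field_simp
      rw [this]; linarith
    have hεinv : (1:ℝ) ≤ 1/ε := by
      rw [le_div_iff₀ hε0]; linarith
    have hL0 : 1 ≤ L := le_trans hεinv hL1
    set N : ℕ := ⌈L⌉₊ with hN_def
    have hN1 : 1 ≤ N := Nat.one_le_iff_ne_zero.mpr (by
      simp only [hN_def, ne_eq, Nat.ceil_eq_zero, not_le]; linarith)
    have hNL : L ≤ (N:ℝ) := Nat.le_ceil L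
    have hNup : (N:ℝ) ≤ L + 1 := le_of_lt (Nat.ceil_lt_add_one (by linarith))
    have hN1' : (1:ℝ) ≤ (N:ℝ) := by exact_mod_cast hN1
    have h2 : (2:ℝ) ^ (-(N:ℝ) * ε) ≤ F t := by
      rw [Real.rpow_def_of_pos (by norm_num : (0:ℝ) < 2), ← Real.exp_log hpos,
        Real.exp_le_exp]
      have h3 : L * (ε * Real.log 2) ≤ (N:ℝ) * (ε * Real.log 2) :=
        mul_le_mul_of_nonneg_right hNL hεlog2.le
      have h4 : L * (ε * Real.log 2) = -Real.log (F t) := by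
        rw [hL_def]; field_simp
      nlinarith
    have hΘN : Θ (N:ℝ) ≤ Θ (L + 1) := hΘmono (Set.mem_Ici.mpr hN1') (Set.mem_Ici.mpr (by linarith)) hNup
    have hΘ1' : 1 ≤ Θ (L+1) := hΘ1 _ (by linarith)
    have happ := hyp N hN1 t ht
    rw [← hFeq t ht] at happ
    have hb1 : K * Θ (N:ℝ) * F t ≤ K * Θ (L+1) * F t := by
      apply mul_le_mul_of_nonneg_right _ hpos.le
      exact mul_le_mul_of_nonneg_left hΘN hK
    have hb2 : K * (2:ℝ) ^ (-(N:ℝ) * ε) ≤ K * F t := mul_le_mul_of_nonneg_left h2 hK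
    nlinarith [mul_nonneg (mul_nonneg hK hpos.le) (sub_nonneg.mpr hΘ1')]
  -- main step : F vanishes on [0, T]
  have hFzero : ∀ t ∈ Set.Icc 0 T, F t = 0 := by
    by_contra hcon
    push_neg at hcon
    obtain ⟨ts, hts, hFts⟩ := hcon
    have hFts' : 0 < F ts := lt_of_le_of_ne (hFnn ts hts.1) (Ne.symm hFts)
    set b := min (F ts) (1/2) with hb_def
    have hb0 : 0 < b := lt_min hFts' (by norm_num)
    have hb2 : b ≤ 1/2 := min_le_right _ _
    obtain ⟨t₁, ht₁mem, ht₁⟩ : ∃ t₁ ∈ Set.Icc 0 ts, F t₁ = b := by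
      have h1 : b ∈ Set.Icc (F 0) (F ts) := by
        rw [hF0]; exact ⟨hb0.le, min_le_left _ _⟩
      obtain ⟨t₁, hm, he⟩ := intermediate_value_Icc hts.1 hFcont.continuousOn h1
      exact ⟨t₁, hm, he⟩
    set Gb : ℝ := 1 - Real.log b / (ε * Real.log 2) with hGb_def
    have hlogb : Real.log b ≤ 0 := Real.log_nonpos hb0.le (by linarith)
    have hGb1 : 1 ≤ Gb := by
      have : Real.log b / (ε * Real.log 2) ≤ 0 := div_nonpos_iff.mpr (Or.inr ⟨hlogb, hεlog2.le⟩)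
      rw [hGb_def]; linarith
    set C := 2*K/(ε*Real.log 2) with hC_def
    have hC0 : 0 ≤ C := by positivity
    have cont1Θ : ContinuousOn (fun u => 1/Θ u) (Set.Ici (1:ℝ)) := by
      apply continuousOn_const.div hΘcont
      intro s hs
      have := hΘ1 s hs; linarith
    -- key integral bound
    have claim : ∀ n : ℕ, Gb ≤ (n:ℝ) → (∫ u in Gb..(n:ℝ), 1/Θ u) ≤ C*T := by
      intro n hn
      set x := Real.exp (-(((n:ℝ)) - 1) * (ε * Real.log 2)) with hx_def
      have hx0 : 0 < x := Real.exp_pos _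
      have hxb : x ≤ b := by
        rw [hx_def, ← Real.exp_log hb0, Real.exp_le_exp]
        have h1 : -Real.log b / (ε*Real.log 2) ≤ (n:ℝ) - 1 := by
          rw [hGb_def] at hn; rw [neg_div]; linarith
        have h2 := (div_le_iff₀ hεlog2).mp h1
        nlinarith
      obtain ⟨t', ht'mem, ht'⟩ : ∃ t' ∈ Set.Icc 0 t₁, F t' = x := by
        have h1 : x ∈ Set.Icc (F 0) (F t₁) := by rw [hF0, ht₁]; exact ⟨hx0.le, hxb⟩
        obtain ⟨t', hm, he⟩ := intermediate_value_Icc ht₁mem.1 hFcont.continuousOn h1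
        exact ⟨t', hm, he⟩
      have ht'le : t' ≤ t₁ := ht'mem.2
      have hIccT : Set.Icc t' t₁ ⊆ Set.Icc 0 T := fun u hu =>
        ⟨le_trans ht'mem.1 hu.1, le_trans hu.2 (le_trans ht₁mem.2 hts.2)⟩
      have hFpos' : ∀ u ∈ Set.Icc t' t₁, 0 < F u := fun u hu =>
        lt_of_lt_of_le hx0 (ht' ▸ hFmono hu.1)
      have hFle : ∀ u ∈ Set.Icc t' t₁, F u ≤ 1/2 := fun u hu =>
        le_trans (ht₁ ▸ hFmono hu.2) hb2
      set G : ℝ → ℝ := fun u => 1 - Real.log (F u) / (ε * Real.log 2) with hG_def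
      set G' : ℝ → ℝ := fun u => -(fc u / F u / (ε * Real.log 2)) with hG'_def
      have huIcc : Set.uIcc t' t₁ = Set.Icc t' t₁ := Set.uIcc_of_le ht'le
      have hGd : ∀ u ∈ Set.uIcc t' t₁, HasDerivAt G (G' u) u := by
        intro u hu
        rw [huIcc] at hu
        have h1 : HasDerivAt (fun v => Real.log (F v)) (fc u / F u) u :=
          (hFd u).log (hFpos' u hu).ne'
        have h2 := (h1.div_const (ε * Real.log 2)).const_sub 1
        exact h2
      have hGcont : ContinuousOn G (Set.uIcc t' t₁) :=
        fun u hu => ((hGd u hu).continuousAt).continuousWithinAt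
      have hG'cont : ContinuousOn G' (Set.uIcc t' t₁) := by
        rw [huIcc]
        exact ((hfc_cont.continuousOn.div hFcont.continuousOn
          (fun u hu => (hFpos' u hu).ne')).div_const _).neg
      have hGmem : ∀ u ∈ Set.Icc t' t₁, 1 ≤ G u := by
        intro u hu
        have hlF : Real.log (F u) ≤ 0 :=
          Real.log_nonpos (hFpos' u hu).le (by linarith [hFle u hu])
        have h3 : Real.log (F u) / (ε*Real.log 2) ≤ 0 := div_nonpos_iff.mpr (Or.inr ⟨hlF, hεlog2.le⟩)
        simp only [hG_def]; linarith
      have hGimg : G '' Set.uIcc t' t₁ ⊆ Set.Ici 1 := by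
        rintro _ ⟨u, hu, rfl⟩
        rw [huIcc] at hu
        exact hGmem u hu
      have hΘG : ContinuousOn (fun u => 1/Θ u) (G '' Set.uIcc t' t₁) :=
        cont1Θ.mono hGimg
      have hsub := intervalIntegral.integral_comp_smul_deriv' hGd hG'cont hΘG
      have hGt' : G t' = (n:ℝ) := by
        simp only [hG_def]
        rw [ht', hx_def, Real.log_exp]
        field_simp
        ring
      have hGt₁ : G t₁ = Gb := by simp only [hG_def, hGb_def]; rw [ht₁]
      have heq : (∫ u in Gb..(n:ℝ), 1/Θ u) = ∫ u in t'..t₁, (-(G' u)) * (1/Θ (G u)) := by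
        rw [← hGt', ← hGt₁, intervalIntegral.integral_symm, ← hsub,
          ← intervalIntegral.integral_neg]
        congr 1
        funext u
        simp only [Function.comp, smul_eq_mul]
        ring
      have hΘGcont : ContinuousOn (fun u => 1/Θ (G u)) (Set.uIcc t' t₁) :=
        hΘG.comp hGcont (Set.mapsTo_image _ _)
      have hintg : IntervalIntegrable (fun u => (-(G' u)) * (1/Θ (G u))) volume t' t₁ :=
        (hG'cont.neg.mul hΘGcont).intervalIntegrable
      have hbound : ∀ u ∈ Set.Icc t' t₁, (-(G' u)) * (1/Θ (G u)) ≤ C := by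
        intro u hu
        have hk := key u (hIccT hu) (hFpos' u hu) (hFle u hu)
        have hfcu : fc u = f u := hfc_eq u (hIccT hu)
        have hΘGu : 1 ≤ Θ (G u) := hΘ1 _ (hGmem u hu)
        have hFu := hFpos' u hu
        have he1 : (-(G' u)) * (1/Θ (G u)) = fc u / (F u * (ε*Real.log 2) * Θ (G u)) := by
          simp only [hG'_def]
          field_simp
        rw [he1]
        have he2 : fc u / (F u * (ε*Real.log 2) * Θ (G u))
            ≤ (2*K*Θ (G u)*F u) / (F u * (ε*Real.log 2) * Θ (G u)) := by
          apply div_le_div_of_nonneg_right ?_ (by positivity)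
          · rw [hfcu]; simpa only [hG_def] using hk
        refine le_trans he2 (le_of_eq ?_)
        rw [hC_def]
        field_simp
      have hintle := intervalIntegral.integral_mono_on ht'le hintg
        intervalIntegrable_const hbound
      rw [heq]
      have hconst : (∫ _u in t'..t₁, C) = (t₁ - t') * C := by
        rw [intervalIntegral.integral_const, smul_eq_mul]
      rw [hconst] at hintle
      have ht'0 : 0 ≤ t' := ht'mem.1
      have ht₁T : t₁ ≤ T := le_trans ht₁mem.2 hts.2
      refine le_trans hintle ?_
      rw [mul_comm]
      exact mul_le_mul_of_nonneg_left (by linarith) hC0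
    have h1Θnn : ∀ u : ℝ, 1 ≤ u → 0 ≤ 1/Θ u := by
      intro u hu
      have := hΘ1 u hu
      positivity
    have hΘint : ∀ (n : ℕ), IntegrableOn (fun u => 1/Θ u) (Set.Ioc 1 (n:ℝ)) volume := by
      intro n
      have hcc : ContinuousOn (fun u => 1/Θ u) (Set.Icc (1:ℝ) (max 1 (n:ℝ))) :=
        cont1Θ.mono fun u hu => hu.1
      exact hcc.integrableOn_Icc.mono_set
        fun u hu => ⟨hu.1.le, le_trans hu.2 (le_max_right _ _)⟩
    have hev : ∀ᶠ (n:ℕ) in atTop, (∫ u in (1:ℝ)..(n:ℝ), ‖1/Θ u‖) ≤ (Gb - 1) + C*T := by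
      filter_upwards [eventually_ge_atTop (⌈Gb⌉₊)] with n hn
      have hGbn : Gb ≤ (n:ℝ) := le_trans (Nat.le_ceil Gb) (by exact_mod_cast hn)
      have hn1 : (1:ℝ) ≤ (n:ℝ) := le_trans hGb1 hGbn
      have hnorm : (∫ u in (1:ℝ)..(n:ℝ), ‖1/Θ u‖) = ∫ u in (1:ℝ)..(n:ℝ), 1/Θ u := by
        apply intervalIntegral.integral_congr
        intro u hu
        rw [Set.uIcc_of_le hn1] at hu
        exact Real.norm_of_nonneg (h1Θnn u hu.1)
      rw [hnorm]
      have hi1 : IntervalIntegrable (fun u => 1/Θ u) volume 1 Gb := by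
        apply ContinuousOn.intervalIntegrable
        apply cont1Θ.mono
        rw [Set.uIcc_of_le hGb1]
        intro u hu; exact hu.1
      have hi2 : IntervalIntegrable (fun u => 1/Θ u) volume Gb (n:ℝ) := by
        apply ContinuousOn.intervalIntegrable
        apply cont1Θ.mono
        rw [Set.uIcc_of_le hGbn]
        intro u hu; exact le_trans hGb1 hu.1
      rw [← intervalIntegral.integral_add_adjacent_intervals hi1 hi2]
      have hpart1 : (∫ u in (1:ℝ)..Gb, 1/Θ u) ≤ Gb - 1 := by
        have h3 := intervalIntegral.integral_mono_on hGb1 hi1 intervalIntegrable_const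
          (fun u hu => by
            have h4 : 1 ≤ Θ u := hΘ1 u hu.1
            rw [div_le_one (by linarith)]
            exact h4)
        simpa using h3
      have hpart2 := claim n hGbn
      linarith
    have hInt : IntegrableOn (fun u => 1/Θ u) (Set.Ioi (1:ℝ)) volume :=
      MeasureTheory.integrableOn_Ioi_of_intervalIntegral_norm_bounded ((Gb-1)+C*T) 1 hΘint
        tendsto_natCast_atTop_atTop hev
    have hae : 0 ≤ᵐ[volume.restrict (Set.Ioi (1:ℝ))] fun u => 1/Θ u := by
      filter_upwards [ae_restrict_mem measurableSet_Ioi] with u hu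
      exact h1Θnn u (le_of_lt hu)
    have hfin := MeasureTheory.ofReal_integral_eq_lintegral_ofReal hInt hae
    rw [hΘdiv] at hfin
    exact ENNReal.ofReal_ne_top hfin
  -- conclude f = 0
  intro t ht
  have hle : ∀ᶠ N : ℕ in atTop, f t ≤ K * 2 ^ (-(N:ℝ)*ε) := by
    filter_upwards [eventually_ge_atTop 1] with N hN
    have h1 := hyp N hN t ht
    rw [← hFeq t ht, hFzero t ht] at h1
    simpa using h1
  have htend : Tendsto (fun N : ℕ => K * 2 ^ (-(N:ℝ)*ε)) atTop (nhds 0) := by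
    have h1 : Tendsto (fun N : ℕ => ((2:ℝ) ^ (-ε)) ^ N) atTop (nhds 0) :=
      tendsto_pow_atTop_nhds_zero_of_lt_one (by positivity)
        (Real.rpow_lt_one_of_one_lt_of_neg one_lt_two (by linarith))
    have h2 : (fun N : ℕ => K * 2 ^ (-(N:ℝ)*ε)) = fun N : ℕ => K * ((2:ℝ)^(-ε))^N := by
      funext N
      rw [← Real.rpow_natCast ((2:ℝ)^(-ε)) N, ← Real.rpow_mul (by norm_num)]
      congr 1
      ring
    rw [h2]
    simpa using h1.const_mul K
  have hle0 : f t ≤ 0 := ge_of_tendsto htend hle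
  exact le_antisymm hle0 (hfpos t ht)
end

section
/- Let $a \in (0,1)$ and define $g : \mathbb{R}^2 \to \mathbb{R}$ by $g(x) = \log(e + \log|x|^{-1})$ for $0 < |x| \le 1$ and $g(x) = 0$ for $|x| > 1$ (and $g(0)$ arbitrary). Then for every real $p \ge 1$, $g \in L^p(\mathbb{R}^2)$ and there is a constant $C$ independent of $p$ with $\|g\|_{L^p(\mathbb{R}^2)} \le C \log(1 + p)$. -/
open MeasureTheory Set Metric
open scoped ENNReal

lemma lintegral_fun_norm_addHaar' {E : Type*} [NormedAddCommGroup E] [NormedSpace ℝ E]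
    [MeasurableSpace E] [BorelSpace E] [Nontrivial E] [FiniteDimensional ℝ E]
    (μ : Measure E) [μ.IsAddHaarMeasure] (f : ℝ → ℝ≥0∞) (hf : Measurable f) :
    ∫⁻ x, f ‖x‖ ∂μ = μ.toSphere Set.univ *
      ∫⁻ y in Ioi (0:ℝ), ENNReal.ofReal (y ^ (Module.finrank ℝ E - 1)) * f y := by
  calc ∫⁻ x, f ‖x‖ ∂μ = ∫⁻ x : ({0}ᶜ : Set E), f ‖x.1‖ ∂(μ.comap (↑)) := by
        rw [lintegral_subtype_comap (measurableSet_singleton (0:E)).compl fun x ↦ f ‖x‖,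
          restrict_compl_singleton]
    _ = ∫⁻ x : sphere (0:E) 1 × Ioi (0:ℝ), f x.2
          ∂(μ.toSphere.prod (Measure.volumeIoiPow (Module.finrank ℝ E - 1))) := by
        rw [← μ.measurePreserving_homeomorphUnitSphereProd.lintegral_comp_emb
          (Homeomorph.measurableEmbedding (homeomorphUnitSphereProd E)) (fun x ↦ f x.2.1)]
        simp only [homeomorphUnitSphereProd_apply_snd_coe]
    _ = μ.toSphere Set.univ * ∫⁻ r : Ioi (0:ℝ), f r ∂(Measure.volumeIoiPow (Module.finrank ℝ E - 1)) := by
        have h := lintegral_prod (μ := μ.toSphere)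
          (ν := Measure.volumeIoiPow (Module.finrank ℝ E - 1))
          (fun x : sphere (0:E) 1 × Ioi (0:ℝ) ↦ f x.2.1)
          (hf.comp (measurable_subtype_coe.comp measurable_snd)).aemeasurable
        rw [h]
        exact (lintegral_const (μ := μ.toSphere)
          (∫⁻ r : ↑(Ioi (0:ℝ)), f r ∂(Measure.volumeIoiPow (Module.finrank ℝ E - 1)))).trans
          (mul_comm _ _)
    _ = _ := by
        rw [Measure.volumeIoiPow, lintegral_withDensity_eq_lintegral_mul (Measure.comap Subtype.val volume)
          (by fun_prop) (g := fun r : Ioi (0:ℝ) ↦ f r.1) (by fun_prop)]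
        rw [show ((fun r : Ioi (0:ℝ) ↦ ENNReal.ofReal (r.1 ^ (Module.finrank ℝ E - 1))) * fun r : Ioi (0:ℝ) ↦ f r.1)
            = fun r : Ioi (0:ℝ) ↦ ENNReal.ofReal (r.1 ^ (Module.finrank ℝ E - 1)) * f r.1 from rfl,
          lintegral_subtype_comap measurableSet_Ioi (fun y : ℝ ↦ ENNReal.ofReal (y ^ (Module.finrank ℝ E - 1)) * f y)]

set_option maxHeartbeats 1000000

open Real

lemma auxL (p : ℝ) (hp : 1 ≤ p) : Real.log 2 ≤ Real.log (1 + p) :=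
  Real.log_le_log (by norm_num) (by linarith)

lemma auxLpos (p : ℝ) (hp : 1 ≤ p) : 0 < Real.log (1 + p) :=
  lt_of_lt_of_le (Real.log_pos (by norm_num)) (auxL p hp)

lemma auxLlep (p : ℝ) (hp : 1 ≤ p) : Real.log (1 + p) ≤ p := by
  have := Real.log_le_sub_one_of_pos (x := 1 + p) (by linarith)
  linarith

lemma aux_nonneg {r : ℝ} (h0 : 0 < r) (h2 : r ≤ 1) :
    0 ≤ Real.log (Real.exp 1 + Real.log r⁻¹) := by
  have h : 0 ≤ Real.log r⁻¹ := by
    rw [Real.log_inv]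
    have := Real.log_nonpos h0.le h2
    linarith
  have : (1 : ℝ) ≤ Real.exp 1 + Real.log r⁻¹ := by
    have := Real.add_one_le_exp 1; linarith
  exact Real.log_nonneg this

-- head bound
lemma aux_head (p : ℝ) (hp : 1 ≤ p) {r : ℝ} (h0 : 0 < r)
    (h1 : Real.exp (-(p * Real.log (1 + p))) ≤ r) (h2 : r ≤ 1) :
    Real.log (Real.exp 1 + Real.log r⁻¹) ≤ 3 * Real.log (1 + p) := by
  have hL : 0 < Real.log (1 + p) := auxLpos p hp
  have hLp : Real.log (1 + p) ≤ p := auxLlep p hp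
  have htnn : 0 ≤ Real.log r⁻¹ := by
    rw [Real.log_inv]; have := Real.log_nonpos h0.le h2; linarith
  have htle : Real.log r⁻¹ ≤ p * Real.log (1 + p) := by
    rw [Real.log_inv]
    have : -(p * Real.log (1 + p)) ≤ Real.log r := by
      rw [← Real.log_exp (-(p * Real.log (1 + p)))]
      exact Real.log_le_log (Real.exp_pos _) h1
    linarith
  have he : Real.exp 1 < 2.7182818286 := Real.exp_one_lt_d9
  have hexpL : Real.exp (Real.log (1 + p)) = 1 + p := Real.exp_log (by linarith)
  have hpL : p * Real.log (1 + p) ≤ p * p :=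
    mul_le_mul_of_nonneg_left hLp (by linarith)
  have key : Real.exp 1 + Real.log r⁻¹ ≤ Real.exp (3 * Real.log (1 + p)) := by
    have h3 : Real.exp (3 * Real.log (1 + p)) = (1 + p) * ((1 + p) * (1 + p)) := by
      rw [show (3 : ℝ) * Real.log (1 + p) =
        Real.log (1 + p) + (Real.log (1 + p) + Real.log (1 + p)) by ring,
        Real.exp_add, Real.exp_add, hexpL]
    rw [h3]
    nlinarith
  have hpos : 0 < Real.exp 1 + Real.log r⁻¹ := by
    have := Real.exp_pos 1; linarith
  calc Real.log (Real.exp 1 + Real.log r⁻¹) ≤ Real.log (Real.exp (3 * Real.log (1 + p))) :=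
        Real.log_le_log hpos key
    _ = 3 * Real.log (1 + p) := Real.log_exp _

-- tail bound
lemma aux_tail (p : ℝ) (hp : 1 ≤ p) {r : ℝ} (h0 : 0 < r)
    (h1 : r < Real.exp (-(p * Real.log (1 + p)))) :
    r * Real.log (Real.exp 1 + Real.log r⁻¹) ^ p ≤
      (Real.exp 1 * (1 + p * Real.log (1 + p))) ^ p *
        Real.exp (-(3 / 2) * (p * Real.log (1 + p))) * r ^ (-(1 / 2) : ℝ) := by
  have hL : 0 < Real.log (1 + p) := auxLpos p hp
  have hL2 : Real.log 2 ≤ Real.log (1 + p) := auxL p hp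
  have hlog2 : (0.6931471803 : ℝ) < Real.log 2 := Real.log_two_gt_d9
  set L : ℝ := Real.log (1 + p) with hLdef
  set T : ℝ := p * L with hTdef
  have hT : 0 < T := by positivity
  set t : ℝ := Real.log r⁻¹ with htdef
  have hrt : Real.log r = -t := by rw [htdef, Real.log_inv]; ring
  have ht : T < t := by
    have h' : Real.log r < -T := by
      calc Real.log r < Real.log (Real.exp (-T)) := Real.log_lt_log h0 h1
        _ = -T := Real.log_exp _
    linarith
  have ht0 : 0 < t := hT.trans ht
  have he1 : (1 : ℝ) ≤ Real.exp 1 := by have := Real.add_one_le_exp 1; linarith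
  set A : ℝ := Real.exp 1 * (1 + T) with hAdef
  have hA1 : Real.exp 1 ≤ A := le_mul_of_one_le_right (Real.exp_pos 1).le (by linarith)
  have hAe : (1 : ℝ) ≤ A := le_trans he1 hA1
  set s : ℝ := (t - T) / (1 + T) with hsdef
  have hs : 0 ≤ s := by
    apply div_nonneg <;> linarith
  have step1 : Real.log (Real.exp 1 + t) ≤ Real.log A + s := by
    have e1 : Real.exp 1 + t ≤ Real.exp 1 * (1 + t) := by nlinarith
    have e2 : Real.log (Real.exp 1 + t) ≤ 1 + Real.log (1 + t) := by
      calc Real.log (Real.exp 1 + t) ≤ Real.log (Real.exp 1 * (1 + t)) :=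
            Real.log_le_log (by positivity) e1
        _ = 1 + Real.log (1 + t) := by
            rw [Real.log_mul (Real.exp_ne_zero 1) (by linarith), Real.log_exp]
    have e3 : Real.log (1 + t) ≤ Real.log (1 + T) + s := by
      have d1 : Real.log (1 + t) - Real.log (1 + T) = Real.log ((1 + t) / (1 + T)) :=
        (Real.log_div (by linarith) (by linarith)).symm
      have d2 : Real.log ((1 + t) / (1 + T)) ≤ (1 + t) / (1 + T) - 1 :=
        Real.log_le_sub_one_of_pos (by positivity)
      have d3 : (1 + t) / (1 + T) - 1 = s := by
        rw [hsdef]; field_simp; ring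
      linarith
    have e4 : Real.log A = 1 + Real.log (1 + T) := by
      rw [hAdef, Real.log_mul (Real.exp_ne_zero 1) (by linarith), Real.log_exp]
    linarith
  have step2 : Real.log (Real.exp 1 + t) ≤ A * Real.exp s := by
    have hlogA1 : 1 ≤ Real.log A := by
      calc (1 : ℝ) = Real.log (Real.exp 1) := (Real.log_exp 1).symm
        _ ≤ Real.log A := Real.log_le_log (Real.exp_pos 1) hA1
    have hlogAA : Real.log A ≤ A := by
      have := Real.log_le_sub_one_of_pos (lt_of_lt_of_le one_pos hAe)
      linarith
    have hAs : s ≤ A * s := le_mul_of_one_le_left hs hAe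
    have hexps : A * (1 + s) ≤ A * Real.exp s :=
      mul_le_mul_of_nonneg_left (by have := Real.add_one_le_exp s; linarith)
        (by linarith)
    have : Real.log A + s ≤ A * (1 + s) := by
      have : A * (1 + s) = A + A * s := by ring
      linarith
    linarith
  have hlognn : 0 ≤ Real.log (Real.exp 1 + t) := Real.log_nonneg (by linarith)
  have step3 : Real.log (Real.exp 1 + t) ^ p ≤ A ^ p * Real.exp (s * p) := by
    calc Real.log (Real.exp 1 + t) ^ p ≤ (A * Real.exp s) ^ p :=
          Real.rpow_le_rpow hlognn step2 (by linarith)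
      _ = A ^ p * Real.exp s ^ p :=
          Real.mul_rpow (by linarith) (Real.exp_pos s).le
      _ = A ^ p * Real.exp (s * p) := by
          rw [Real.rpow_def_of_pos (Real.exp_pos s), Real.log_exp]
  have step4 : s * p ≤ (3 / 2) * (t - T) := by
    rw [hsdef, div_mul_eq_mul_div, div_le_iff₀ (by linarith : (0 : ℝ) < 1 + T)]
    have h2p3T : 2 * p ≤ 3 * (1 + T) := by nlinarith
    nlinarith
  have hApnn : (0 : ℝ) ≤ A ^ p := Real.rpow_nonneg (by linarith) p
  have c1 : Real.log (Real.exp 1 + t) ^ p ≤ A ^ p * Real.exp ((3 / 2) * (t - T)) :=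
    step3.trans (mul_le_mul_of_nonneg_left (Real.exp_le_exp.mpr step4) hApnn)
  have hrexp : r = Real.exp (-t) := by rw [← Real.exp_log h0, hrt]
  have hrpow : r ^ (-(1 / 2) : ℝ) = Real.exp (t / 2) := by
    rw [Real.rpow_def_of_pos h0, hrt]; ring_nf
  rw [hrpow]
  calc r * Real.log (Real.exp 1 + t) ^ p
      ≤ r * (A ^ p * Real.exp ((3 / 2) * (t - T))) :=
        mul_le_mul_of_nonneg_left c1 h0.le
    _ = A ^ p * Real.exp (-(3 / 2) * T) * Real.exp (t / 2) := by
        have hE : Real.exp (-t) * Real.exp (3 / 2 * (t - T)) =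
            Real.exp (-(3 / 2) * T) * Real.exp (t / 2) := by
          rw [← Real.exp_add, ← Real.exp_add]; ring_nf
        rw [hrexp]
        linear_combination (A ^ p) * hE

-- tail integral constant bound
lemma aux_K (p : ℝ) (hp : 1 ≤ p) :
    (Real.exp 1 * (1 + p * Real.log (1 + p))) ^ p *
        Real.exp (-(3 / 2) * (p * Real.log (1 + p))) *
      (2 * Real.exp (-(p * Real.log (1 + p))) ^ ((1 : ℝ) / 2)) ≤
      2 * (5 * Real.log (1 + p)) ^ p := by
  have hL : 0 < Real.log (1 + p) := auxLpos p hp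
  have hL2 : Real.log 2 ≤ Real.log (1 + p) := auxL p hp
  have hlog2 : (0.6931471803 : ℝ) < Real.log 2 := Real.log_two_gt_d9
  have he : Real.exp 1 < 2.7182818286 := Real.exp_one_lt_d9
  have he1 : (1 : ℝ) ≤ Real.exp 1 := by have := Real.add_one_le_exp 1; linarith
  set L : ℝ := Real.log (1 + p) with hLdef
  set T : ℝ := p * L with hTdef
  have hT : 0 < T := by positivity
  set A : ℝ := Real.exp 1 * (1 + T) with hAdef
  have hAnn : (0 : ℝ) ≤ A := by positivity
  have h1 : Real.exp (-T) ^ ((1 : ℝ) / 2) = Real.exp (-T / 2) := by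
    rw [Real.rpow_def_of_pos (Real.exp_pos _), Real.log_exp]; ring_nf
  have h2 : Real.exp (-(3 / 2) * T) * Real.exp (-T / 2) = Real.exp (-(2 * L)) ^ p := by
    rw [Real.rpow_def_of_pos (Real.exp_pos _), Real.log_exp, ← Real.exp_add]
    ring_nf
    rw [hTdef]; ring_nf
  have hexpL : Real.exp L = 1 + p := Real.exp_log (by linarith)
  have hkey : A * Real.exp (-(2 * L)) ≤ 5 * L := by
    have hexp2L : Real.exp (2 * L) = (1 + p) * (1 + p) := by
      rw [show (2 : ℝ) * L = L + L by ring, Real.exp_add, hexpL]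
    have h5L : Real.exp 1 ≤ 5 * L := by nlinarith
    have h3pL : Real.exp 1 * (p * L) ≤ 3 * (p * L) := by nlinarith
    have hA5 : A ≤ 5 * L * ((1 + p) * (1 + p)) := by
      rw [hAdef, hTdef]
      nlinarith
    rw [Real.exp_neg, ← div_eq_mul_inv, div_le_iff₀ (Real.exp_pos _), hexp2L]
    linarith
  have main : A ^ p * Real.exp (-(2 * L)) ^ p ≤ (5 * L) ^ p := by
    rw [← Real.mul_rpow hAnn (Real.exp_pos _).le]
    exact Real.rpow_le_rpow (by positivity) hkey (by linarith)
  calc A ^ p * Real.exp (-(3 / 2) * T) * (2 * Real.exp (-T) ^ ((1 : ℝ) / 2))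
      = 2 * (A ^ p * (Real.exp (-(3 / 2) * T) * Real.exp (-T / 2))) := by rw [h1]; ring
    _ = 2 * (A ^ p * Real.exp (-(2 * L)) ^ p) := by rw [h2]
    _ ≤ 2 * (5 * L) ^ p := by linarith

open MeasureTheory in
theorem stmt_19 (g : EuclideanSpace ℝ (Fin 2) → ℝ)
    (hg1 : ∀ x : EuclideanSpace ℝ (Fin 2), 0 < ‖x‖ → ‖x‖ ≤ 1 →
      g x = Real.log (Real.exp 1 + Real.log ‖x‖⁻¹))
    (hg2 : ∀ x : EuclideanSpace ℝ (Fin 2), 1 < ‖x‖ → g x = 0) :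
    ∃ C : ℝ, 0 < C ∧ ∀ p : ℝ, 1 ≤ p →
      MemLp g (ENNReal.ofReal p) volume ∧
        eLpNorm g (ENNReal.ofReal p) volume ≤ ENNReal.ofReal (C * Real.log (1 + p)) := by
  classical
  set g' : EuclideanSpace ℝ (Fin 2) → ℝ :=
    fun x => if ‖x‖ ≤ 1 then Real.log (Real.exp 1 + Real.log ‖x‖⁻¹) else 0 with hg'def
  have hf0meas : Measurable fun r : ℝ =>
      if r ≤ 1 then Real.log (Real.exp 1 + Real.log r⁻¹) else 0 := by
    apply Measurable.ite (measurableSet_le measurable_id measurable_const)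
    · exact (measurable_const.add (Real.measurable_log.comp measurable_inv)).log
    · exact measurable_const
  have hg'meas : Measurable g' := hf0meas.comp measurable_norm
  have hae : g =ᵐ[(volume : Measure (EuclideanSpace ℝ (Fin 2)))] g' := by
    rw [Filter.EventuallyEq, ae_iff]
    refine measure_mono_null ?_ (measure_singleton (0 : EuclideanSpace ℝ (Fin 2)))
    intro x hx
    simp only [mem_setOf_eq] at hx
    by_contra hx0
    have hn : 0 < ‖x‖ := by
      simp only [mem_singleton_iff] at hx0
      simpa [norm_pos_iff] using hx0
    apply hx
    rcases le_or_gt ‖x‖ 1 with h | h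
    · rw [hg1 x hn h]; simp only [hg'def, if_pos h]
    · rw [hg2 x h]; simp only [hg'def, if_neg (not_le.mpr h)]
  set S : ℝ≥0∞ := (volume : Measure (EuclideanSpace ℝ (Fin 2))).toSphere Set.univ with hSdef
  have hSfin : S ≠ ⊤ := measure_ne_top _ _
  set S₀ : ℝ := S.toReal with hS₀def
  have hS₀nn : 0 ≤ S₀ := ENNReal.toReal_nonneg
  set M : ℝ := max 1 (3 * S₀) with hMdef
  have hM1 : (1 : ℝ) ≤ M := le_max_left _ _
  refine ⟨5 * M, by linarith, fun p hp => ?_⟩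
  have hp0 : 0 < p := lt_of_lt_of_le one_pos hp
  have hL : 0 < Real.log (1 + p) := auxLpos p hp
  set L : ℝ := Real.log (1 + p) with hLdef
  set r0 : ℝ := Real.exp (-(p * L)) with hr0def
  have hr0pos : 0 < r0 := Real.exp_pos _
  have hr0le1 : r0 ≤ 1 := Real.exp_le_one_iff.mpr (by nlinarith)
  set K : ℝ := (Real.exp 1 * (1 + p * L)) ^ p * Real.exp (-(3 / 2) * (p * L)) with hKdef
  have hKnn : 0 ≤ K := by
    apply mul_nonneg _ (Real.exp_pos _).le
    apply Real.rpow_nonneg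
    positivity
  have hP0 : (ENNReal.ofReal p) ≠ 0 := by
    rw [Ne, ENNReal.ofReal_eq_zero]; push_neg; linarith
  have hPt : (ENNReal.ofReal p) ≠ ⊤ := ENNReal.ofReal_ne_top
  have hPreal : (ENNReal.ofReal p).toReal = p := ENNReal.toReal_ofReal (by linarith)
  set F : ℝ → ℝ≥0∞ := fun r =>
    ENNReal.ofReal (|if r ≤ 1 then Real.log (Real.exp 1 + Real.log r⁻¹) else 0| ^ p) with hFdef
  have hFmeas : Measurable F := by
    apply ENNReal.measurable_ofReal.comp
    fun_prop
  have hptw : ∀ x : EuclideanSpace ℝ (Fin 2), (‖g' x‖₊ : ℝ≥0∞) ^ p = F ‖x‖ := by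
    intro x
    rw [← enorm_eq_nnnorm, ← ofReal_norm, ENNReal.ofReal_rpow_of_nonneg (norm_nonneg _) (by linarith)]
    simp only [hg'def, hFdef, Real.norm_eq_abs]
  -- polar coordinates
  have hpolar : ∫⁻ x, (‖g' x‖₊ : ℝ≥0∞) ^ p ∂(volume : Measure (EuclideanSpace ℝ (Fin 2)))
      = S * ∫⁻ y in Ioi (0 : ℝ), ENNReal.ofReal y * F y := by
    rw [lintegral_congr hptw, lintegral_fun_norm_addHaar' volume F hFmeas]
    congr 1
    apply lintegral_congr
    intro y
    rw [finrank_euclideanSpace_fin]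
    norm_num
  -- pointwise bound
  have hbound : ∀ y ∈ Ioi (0 : ℝ), ENNReal.ofReal y * F y ≤
      (Ioc (0 : ℝ) 1).indicator (fun _ => ENNReal.ofReal ((3 * L) ^ p)) y
      + (Ioo (0 : ℝ) r0).indicator (fun y => ENNReal.ofReal (K * y ^ (-(1 / 2) : ℝ))) y := by
    intro y hy
    rw [mem_Ioi] at hy
    by_cases hy1 : y ≤ 1
    · by_cases hyr : y < r0
      · refine le_trans ?_ (self_le_add_left _ _)
        rw [indicator_of_mem (mem_Ioo.mpr ⟨hy, hyr⟩)]
        rw [hFdef]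
        simp only [if_pos hy1]
        rw [abs_of_nonneg (aux_nonneg hy hy1), ← ENNReal.ofReal_mul hy.le]
        exact ENNReal.ofReal_le_ofReal (aux_tail p hp hy hyr)
      · refine le_trans ?_ (self_le_add_right _ _)
        rw [indicator_of_mem (mem_Ioc.mpr ⟨hy, hy1⟩)]
        calc ENNReal.ofReal y * F y ≤ 1 * ENNReal.ofReal ((3 * L) ^ p) := by
              apply mul_le_mul'
              · exact ENNReal.ofReal_le_one.mpr hy1
              · rw [hFdef]
                simp only [if_pos hy1]
                apply ENNReal.ofReal_le_ofReal
                rw [abs_of_nonneg (aux_nonneg hy hy1)]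
                exact Real.rpow_le_rpow (aux_nonneg hy hy1)
                  (aux_head p hp hy (not_lt.mp hyr) hy1) (by linarith)
          _ = ENNReal.ofReal ((3 * L) ^ p) := one_mul _
    · have : F y = 0 := by
        rw [hFdef]
        simp only [if_neg hy1, abs_zero]
        rw [Real.zero_rpow (by linarith : p ≠ 0)]
        exact ENNReal.ofReal_zero
      rw [this, mul_zero]
      exact zero_le
  -- integral of the bound
  have hind2 : ∫⁻ y, (Ioo (0 : ℝ) r0).indicator
      (fun y => ENNReal.ofReal (K * y ^ (-(1 / 2) : ℝ))) y
      = ENNReal.ofReal (K * (2 * r0 ^ ((1 : ℝ) / 2))) := by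
    have hint : IntegrableOn (fun y : ℝ => K * y ^ (-(1 / 2) : ℝ)) (Ioo 0 r0) volume := by
      have h := (intervalIntegral.intervalIntegrable_rpow'
        (a := 0) (b := r0) (r := -(1 / 2)) (by norm_num)).const_mul K
      rw [intervalIntegrable_iff, uIoc_of_le hr0pos.le] at h
      exact h.mono_set Ioo_subset_Ioc_self
    have hnn : 0 ≤ᵐ[volume.restrict (Ioo (0:ℝ) r0)] fun y => K * y ^ (-(1 / 2) : ℝ) := by
      filter_upwards [ae_restrict_mem measurableSet_Ioo] with y hy
      exact mul_nonneg hKnn (Real.rpow_nonneg hy.1.le _)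
    have hval : ∫ y in Ioo (0:ℝ) r0, K * y ^ (-(1 / 2) : ℝ) = K * (2 * r0 ^ ((1 : ℝ) / 2)) := by
      rw [← integral_Ioc_eq_integral_Ioo, ← intervalIntegral.integral_of_le hr0pos.le,
        intervalIntegral.integral_const_mul, integral_rpow (Or.inl (by norm_num))]
      rw [show -(1 / 2) + 1 = (1 : ℝ) / 2 by norm_num, Real.zero_rpow (by norm_num)]
      ring
    rw [lintegral_indicator measurableSet_Ioo, ← ofReal_integral_eq_lintegral_ofReal hint hnn, hval]
  have hJ : ∫⁻ y in Ioi (0 : ℝ), ENNReal.ofReal y * F y ≤ ENNReal.ofReal (3 * (5 * L) ^ p) := by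
    calc ∫⁻ y in Ioi (0 : ℝ), ENNReal.ofReal y * F y
        ≤ ∫⁻ y in Ioi (0 : ℝ),
            ((Ioc (0 : ℝ) 1).indicator (fun _ => ENNReal.ofReal ((3 * L) ^ p)) y
            + (Ioo (0 : ℝ) r0).indicator (fun y => ENNReal.ofReal (K * y ^ (-(1 / 2) : ℝ))) y) := by
          apply setLIntegral_mono _ hbound
          apply Measurable.add
          · exact measurable_const.indicator measurableSet_Ioc
          · apply Measurable.indicator _ measurableSet_Ioo
            apply ENNReal.measurable_ofReal.comp
            fun_prop
      _ ≤ ∫⁻ y, ((Ioc (0 : ℝ) 1).indicator (fun _ => ENNReal.ofReal ((3 * L) ^ p)) y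
            + (Ioo (0 : ℝ) r0).indicator (fun y => ENNReal.ofReal (K * y ^ (-(1 / 2) : ℝ))) y) :=
          setLIntegral_le_lintegral _ _
      _ = (∫⁻ y, (Ioc (0 : ℝ) 1).indicator (fun _ => ENNReal.ofReal ((3 * L) ^ p)) y)
            + ∫⁻ y, (Ioo (0 : ℝ) r0).indicator (fun y => ENNReal.ofReal (K * y ^ (-(1 / 2) : ℝ))) y :=
          lintegral_add_left (measurable_const.indicator measurableSet_Ioc) _
      _ ≤ ENNReal.ofReal ((3 * L) ^ p) + ENNReal.ofReal (K * (2 * r0 ^ ((1 : ℝ) / 2))) := by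
          apply add_le_add
          · rw [lintegral_indicator measurableSet_Ioc, setLIntegral_const, Real.volume_Ioc]
            norm_num
          · rw [hind2]
      _ ≤ ENNReal.ofReal (3 * (5 * L) ^ p) := by
          rw [← ENNReal.ofReal_add (by positivity) (by positivity)]
          apply ENNReal.ofReal_le_ofReal
          have hK2 := aux_K p hp
          have h35 : (3 * L) ^ p ≤ (5 * L) ^ p :=
            Real.rpow_le_rpow (by positivity) (by linarith) (by linarith)
          calc (3 * L) ^ p + K * (2 * r0 ^ ((1 : ℝ) / 2))
              ≤ (5 * L) ^ p + 2 * (5 * L) ^ p := add_le_add h35 hK2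
            _ = 3 * (5 * L) ^ p := by ring
  -- assemble
  have key : ∫⁻ x, (‖g' x‖₊ : ℝ≥0∞) ^ p ∂(volume : Measure (EuclideanSpace ℝ (Fin 2)))
      ≤ ENNReal.ofReal ((5 * M * L) ^ p) := by
    rw [hpolar]
    calc S * ∫⁻ y in Ioi (0 : ℝ), ENNReal.ofReal y * F y
        ≤ S * ENNReal.ofReal (3 * (5 * L) ^ p) := mul_le_mul_right hJ _
      _ = ENNReal.ofReal S₀ * ENNReal.ofReal (3 * (5 * L) ^ p) := by
          rw [hS₀def, ENNReal.ofReal_toReal hSfin]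
      _ = ENNReal.ofReal (S₀ * (3 * (5 * L) ^ p)) := (ENNReal.ofReal_mul hS₀nn).symm
      _ ≤ ENNReal.ofReal ((5 * M * L) ^ p) := by
          apply ENNReal.ofReal_le_ofReal
          have hMp : M ≤ M ^ p := by
            calc M = M ^ (1 : ℝ) := (Real.rpow_one M).symm
              _ ≤ M ^ p := Real.rpow_le_rpow_of_exponent_le hM1 hp
          have h3S : 3 * S₀ ≤ M ^ p := le_trans (le_max_right _ _) hMp
          have h5Lnn : (0 : ℝ) ≤ (5 * L) ^ p := Real.rpow_nonneg (by positivity) _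
          calc S₀ * (3 * (5 * L) ^ p) = (3 * S₀) * (5 * L) ^ p := by ring
            _ ≤ M ^ p * (5 * L) ^ p := mul_le_mul_of_nonneg_right h3S h5Lnn
            _ = (M * (5 * L)) ^ p := (Real.mul_rpow (by linarith) (by positivity)).symm
            _ = (5 * M * L) ^ p := by ring_nf
  have hsnorm : eLpNorm g (ENNReal.ofReal p) volume
      = (∫⁻ x, (‖g' x‖₊ : ℝ≥0∞) ^ p ∂(volume : Measure (EuclideanSpace ℝ (Fin 2)))) ^ (1 / p) := by
    rw [eLpNorm_congr_ae hae, eLpNorm_eq_lintegral_rpow_enorm_toReal hP0 hPt, hPreal] <;> rfl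
  have hfinal : eLpNorm g (ENNReal.ofReal p) volume ≤ ENNReal.ofReal (5 * M * L) := by
    rw [hsnorm]
    calc (∫⁻ x, (‖g' x‖₊ : ℝ≥0∞) ^ p ∂(volume : Measure (EuclideanSpace ℝ (Fin 2)))) ^ (1 / p)
        ≤ (ENNReal.ofReal ((5 * M * L) ^ p)) ^ ((1 : ℝ) / p) :=
          ENNReal.rpow_le_rpow key (by positivity)
      _ = ENNReal.ofReal (((5 * M * L) ^ p) ^ ((1 : ℝ) / p)) := by
          rw [ENNReal.ofReal_rpow_of_nonneg (Real.rpow_nonneg (by positivity) _) (by positivity)]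
      _ = ENNReal.ofReal (5 * M * L) := by
          rw [one_div, Real.rpow_rpow_inv (by positivity) (by linarith)]
  refine ⟨⟨hg'meas.aestronglyMeasurable.congr hae.symm,
    lt_of_le_of_lt hfinal ENNReal.ofReal_lt_top⟩, ?_⟩
  calc eLpNorm g (ENNReal.ofReal p) volume ≤ ENNReal.ofReal (5 * M * L) := hfinal
    _ = ENNReal.ofReal (5 * M * Real.log (1 + p)) := by rw [hLdef]
end
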